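/- arXiv:1708.06083 — 2 statements merged into one kernel-verified Lean document; each statement's English description precedes it below -/
import Mathlib

section
/- Let k ≥ 2 be an integer, n ≥ 3, and let x₀, x₁, ..., x_{n-1} be i.i.d. random variables uniformly distributed on {1, 2, ..., k}. Define the perimeter P_n := 2n + x₀ + x_{n-1} + Σ_{i=1}^{n-1} |x_i - x_{i-1}|. Then Var(P_n) = ((4k⁴ - 5k² + 1) + 3(k⁴ - 1)·n) / (45k²). -/
open MeasureTheory ProbabilityTheory
open scoped ENNReal

/-- The uniform probability measure on the integers `{1, ..., k}` (as a measure on `ℕ`). -/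
noncomputable def unifMeasure (k : ℕ) : Measure ℕ :=
  (k : ℝ≥0∞)⁻¹ • ∑ i ∈ Finset.Icc 1 k, Measure.dirac i

section Aux
open Finset

lemma integrable_dirac' {F : ℕ → ℝ} (a : ℕ) : Integrable F (Measure.dirac a) := by
  refine ⟨(Measurable.of_discrete).aestronglyMeasurable, ?_⟩
  rw [HasFiniteIntegral, lintegral_dirac]
  exact ENNReal.coe_lt_top

lemma integral_unifMeasure (k : ℕ) (F : ℕ → ℝ) :
    ∫ a, F a ∂(unifMeasure k) = (k:ℝ)⁻¹ * ∑ v ∈ Icc 1 k, F v := by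
  rw [unifMeasure, integral_smul_measure, integral_finset_sum_measure
    (fun i _ => integrable_dirac' i)]
  simp [integral_dirac, smul_eq_mul]

lemma unifMeasure_singleton {k v : ℕ} (hv : v ∈ Icc 1 k) :
    unifMeasure k {v} = (k:ℝ≥0∞)⁻¹ := by
  rw [unifMeasure, Measure.smul_apply, Measure.finset_sum_apply]
  rw [Finset.sum_eq_single v (fun i _ hi => by simp [Measure.dirac_apply, hi])
    (fun h => absurd hv h)]
  simp [Measure.dirac_apply_of_mem]

lemma unifMeasure_compl (k : ℕ) : unifMeasure k {a : ℕ | a ∉ Icc 1 k} = 0 := by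
  rw [unifMeasure, Measure.smul_apply, Measure.finset_sum_apply]
  rw [Finset.sum_eq_zero fun i hi => by simp [Measure.dirac_apply]; simpa using hi]
  simp

set_option linter.unusedSectionVars false
variable {Ω : Type*} [MeasurableSpace Ω] {μ : Measure Ω} [IsProbabilityMeasure μ]

lemma ae_mem_Icc {k : ℕ} {f : Ω → ℕ} (hf : Measurable f)
    (hfd : Measure.map f μ = unifMeasure k) : ∀ᵐ ω ∂μ, f ω ∈ Icc 1 k := by
  have h : μ (f ⁻¹' {a : ℕ | a ∉ Icc 1 k}) = 0 := by
    rw [← Measure.map_apply hf .of_discrete, hfd, unifMeasure_compl]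
  rw [ae_iff]; exact h

lemma meas_preimage_singleton {k v : ℕ} {f : Ω → ℕ} (hf : Measurable f)
    (hfd : Measure.map f μ = unifMeasure k) (hv : v ∈ Icc 1 k) :
    μ (f ⁻¹' {v}) = (k:ℝ≥0∞)⁻¹ := by
  rw [← Measure.map_apply hf .of_discrete, hfd, unifMeasure_singleton hv]

lemma int_one {k : ℕ} {f : Ω → ℕ} (hf : Measurable f)
    (hfd : Measure.map f μ = unifMeasure k) (F : ℕ → ℝ) :
    ∫ ω, F (f ω) ∂μ = (k:ℝ)⁻¹ * ∑ v ∈ Icc 1 k, F v := by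
  rw [← integral_map hf.aemeasurable (Measurable.of_discrete).aestronglyMeasurable, hfd,
    integral_unifMeasure]

lemma int_pair {k : ℕ} {f g : Ω → ℕ} (hf : Measurable f) (hg : Measurable g)
    (hfd : Measure.map f μ = unifMeasure k) (hgd : Measure.map g μ = unifMeasure k)
    (hprod : ∀ v w : ℕ, μ (f ⁻¹' {v} ∩ g ⁻¹' {w}) = μ (f ⁻¹' {v}) * μ (g ⁻¹' {w}))
    (F : ℕ → ℕ → ℝ) :
    ∫ ω, F (f ω) (g ω) ∂μ
      = (k:ℝ)⁻¹ * (k:ℝ)⁻¹ * ∑ v ∈ Icc 1 k, ∑ w ∈ Icc 1 k, F v w := by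
  have key : (fun ω => F (f ω) (g ω)) =ᵐ[μ] (fun ω => ∑ v ∈ Icc 1 k, ∑ w ∈ Icc 1 k,
      (f ⁻¹' {v} ∩ g ⁻¹' {w}).indicator (fun _ => F v w) ω) := by
    filter_upwards [ae_mem_Icc hf hfd, ae_mem_Icc hg hgd] with ω h1 h2
    have hind : ∀ v w : ℕ, (f ⁻¹' {v} ∩ g ⁻¹' {w}).indicator (fun _ => F v w) ω
        = if (f ω = v ∧ g ω = w) then F v w else 0 := by
      intro v w
      classical
      rw [Set.indicator_apply]
      simp [Set.mem_inter_iff, Set.mem_preimage]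
    simp only [hind]
    symm
    rw [Finset.sum_eq_single (f ω) (fun v _ hv => Finset.sum_eq_zero fun w _ => by
        simp [hv.symm]) (fun h => absurd h1 h)]
    rw [Finset.sum_eq_single (g ω) (fun w _ hw => by simp [hw.symm])
      (fun h => absurd h2 h)]
    rw [if_pos ⟨rfl, rfl⟩]
  rw [integral_congr_ae key,
    integral_finset_sum _ (fun v _ => integrable_finset_sum _ (fun w _ =>
      (integrable_const (F v w)).indicator
        ((hf (measurableSet_singleton v)).inter (hg (measurableSet_singleton w)))))]
  have step : ∀ v ∈ Icc 1 k, ∀ w ∈ Icc 1 k,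
      ∫ ω, (f ⁻¹' {v} ∩ g ⁻¹' {w}).indicator (fun _ => F v w) ω ∂μ
        = (k:ℝ)⁻¹ * (k:ℝ)⁻¹ * F v w := by
    intro v hv w hw
    rw [integral_indicator_const (F v w)
      ((hf (measurableSet_singleton v)).inter (hg (measurableSet_singleton w))),
      measureReal_def, hprod v w, meas_preimage_singleton hf hfd hv, meas_preimage_singleton hg hgd hw]
    rw [ENNReal.toReal_mul, ENNReal.toReal_inv, smul_eq_mul]
    simp
  calc ∑ v ∈ Icc 1 k, ∫ ω, (∑ w ∈ Icc 1 k,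
        (f ⁻¹' {v} ∩ g ⁻¹' {w}).indicator (fun _ => F v w) ω) ∂μ
      = ∑ v ∈ Icc 1 k, ∑ w ∈ Icc 1 k, (k:ℝ)⁻¹ * (k:ℝ)⁻¹ * F v w := by
        refine Finset.sum_congr rfl fun v hv => ?_
        rw [integral_finset_sum _ (fun w _ => (integrable_const (F v w)).indicator
          ((hf (measurableSet_singleton v)).inter (hg (measurableSet_singleton w))))]
        exact Finset.sum_congr rfl fun w hw => step v hv w hw
    _ = (k:ℝ)⁻¹ * (k:ℝ)⁻¹ * ∑ v ∈ Icc 1 k, ∑ w ∈ Icc 1 k, F v w := by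
        rw [Finset.mul_sum]
        exact Finset.sum_congr rfl fun v _ => by rw [Finset.mul_sum]

lemma int_triple {k : ℕ} {f g h : Ω → ℕ} (hf : Measurable f) (hg : Measurable g)
    (hh : Measurable h)
    (hfd : Measure.map f μ = unifMeasure k) (hgd : Measure.map g μ = unifMeasure k)
    (hhd : Measure.map h μ = unifMeasure k)
    (hprod : ∀ u v w : ℕ, μ (f ⁻¹' {u} ∩ (g ⁻¹' {v} ∩ h ⁻¹' {w}))
      = μ (f ⁻¹' {u}) * (μ (g ⁻¹' {v}) * μ (h ⁻¹' {w})))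
    (F : ℕ → ℕ → ℕ → ℝ) :
    ∫ ω, F (f ω) (g ω) (h ω) ∂μ
      = (k:ℝ)⁻¹ * ((k:ℝ)⁻¹ * (k:ℝ)⁻¹)
        * ∑ u ∈ Icc 1 k, ∑ v ∈ Icc 1 k, ∑ w ∈ Icc 1 k, F u v w := by
  have hmS : ∀ u v w : ℕ, MeasurableSet (f ⁻¹' {u} ∩ (g ⁻¹' {v} ∩ h ⁻¹' {w})) :=
    fun u v w => (hf (measurableSet_singleton u)).inter
      ((hg (measurableSet_singleton v)).inter (hh (measurableSet_singleton w)))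
  have key : (fun ω => F (f ω) (g ω) (h ω)) =ᵐ[μ]
      (fun ω => ∑ u ∈ Icc 1 k, ∑ v ∈ Icc 1 k, ∑ w ∈ Icc 1 k,
        (f ⁻¹' {u} ∩ (g ⁻¹' {v} ∩ h ⁻¹' {w})).indicator (fun _ => F u v w) ω) := by
    filter_upwards [ae_mem_Icc hf hfd, ae_mem_Icc hg hgd, ae_mem_Icc hh hhd]
      with ω h1 h2 h3
    have hind : ∀ u v w : ℕ,
        (f ⁻¹' {u} ∩ (g ⁻¹' {v} ∩ h ⁻¹' {w})).indicator (fun _ => F u v w) ω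
        = if (f ω = u ∧ (g ω = v ∧ h ω = w)) then F u v w else 0 := by
      intro u v w
      classical
      rw [Set.indicator_apply]
      simp [Set.mem_inter_iff, Set.mem_preimage, and_assoc]
    simp only [hind]
    symm
    rw [Finset.sum_eq_single (f ω) (fun u _ hu => Finset.sum_eq_zero fun v _ =>
        Finset.sum_eq_zero fun w _ => by simp [hu.symm]) (fun hc => absurd h1 hc)]
    rw [Finset.sum_eq_single (g ω) (fun v _ hv => Finset.sum_eq_zero fun w _ => by
        simp [hv.symm]) (fun hc => absurd h2 hc)]
    rw [Finset.sum_eq_single (h ω) (fun w _ hw => by simp [hw.symm])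
      (fun hc => absurd h3 hc)]
    rw [if_pos ⟨rfl, ⟨rfl, rfl⟩⟩]
  have step : ∀ u ∈ Icc 1 k, ∀ v ∈ Icc 1 k, ∀ w ∈ Icc 1 k,
      ∫ ω, (f ⁻¹' {u} ∩ (g ⁻¹' {v} ∩ h ⁻¹' {w})).indicator (fun _ => F u v w) ω ∂μ
        = (k:ℝ)⁻¹ * ((k:ℝ)⁻¹ * (k:ℝ)⁻¹) * F u v w := by
    intro u hu v hv w hw
    rw [integral_indicator_const (F u v w) (hmS u v w), measureReal_def, hprod u v w,
      meas_preimage_singleton hf hfd hu, meas_preimage_singleton hg hgd hv,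
      meas_preimage_singleton hh hhd hw]
    rw [ENNReal.toReal_mul, ENNReal.toReal_mul, ENNReal.toReal_inv,
      smul_eq_mul]
    simp
  rw [integral_congr_ae key,
    integral_finset_sum _ (fun u _ => integrable_finset_sum _ (fun v _ =>
      integrable_finset_sum _ (fun w _ =>
        (integrable_const (F u v w)).indicator (hmS u v w))))]
  calc ∑ u ∈ Icc 1 k, ∫ ω, (∑ v ∈ Icc 1 k, ∑ w ∈ Icc 1 k,
        (f ⁻¹' {u} ∩ (g ⁻¹' {v} ∩ h ⁻¹' {w})).indicator (fun _ => F u v w) ω) ∂μ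
      = ∑ u ∈ Icc 1 k, ∑ v ∈ Icc 1 k, ∑ w ∈ Icc 1 k,
          (k:ℝ)⁻¹ * ((k:ℝ)⁻¹ * (k:ℝ)⁻¹) * F u v w := by
        refine Finset.sum_congr rfl fun u hu => ?_
        rw [integral_finset_sum _ (fun v _ => integrable_finset_sum _ (fun w _ =>
          (integrable_const (F u v w)).indicator (hmS u v w)))]
        refine Finset.sum_congr rfl fun v hv => ?_
        rw [integral_finset_sum _ (fun w _ =>
          (integrable_const (F u v w)).indicator (hmS u v w))]
        exact Finset.sum_congr rfl fun w hw => step u hu v hv w hw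
    _ = (k:ℝ)⁻¹ * ((k:ℝ)⁻¹ * (k:ℝ)⁻¹)
          * ∑ u ∈ Icc 1 k, ∑ v ∈ Icc 1 k, ∑ w ∈ Icc 1 k, F u v w := by
        rw [Finset.mul_sum]
        refine Finset.sum_congr rfl fun u _ => ?_
        rw [Finset.mul_sum]
        exact Finset.sum_congr rfl fun v _ => by rw [Finset.mul_sum]


lemma sumId (k : ℕ) : ∑ v ∈ Icc 1 k, (v:ℝ) = k*(k+1)/2 := by
  induction k with
  | zero => simp
  | succ m ih => rw [Finset.sum_Icc_succ_top (by omega)]; push_cast; rw [ih]; ring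

lemma sumSq (k : ℕ) : ∑ v ∈ Icc 1 k, (v:ℝ)^2 = k*(k+1)*(2*k+1)/6 := by
  induction k with
  | zero => simp
  | succ m ih => rw [Finset.sum_Icc_succ_top (by omega)]; push_cast; rw [ih]; ring

lemma sumCube (k : ℕ) : ∑ v ∈ Icc 1 k, (v:ℝ)^3 = k^2*(k+1)^2/4 := by
  induction k with
  | zero => simp
  | succ m ih => rw [Finset.sum_Icc_succ_top (by omega)]; push_cast; rw [ih]; ring

lemma sumQuart (k : ℕ) : ∑ v ∈ Icc 1 k, (v:ℝ)^4 = k*(k+1)*(2*k+1)*(3*k^2+3*k-1)/30 := by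
  induction k with
  | zero => simp
  | succ m ih => rw [Finset.sum_Icc_succ_top (by omega)]; push_cast; rw [ih]; ring

lemma sumAbsW (k w : ℕ) (hw : w ∈ Icc 1 k) :
    ∑ v ∈ Icc 1 k, |(v:ℝ) - w| = (w:ℝ)^2 - (k+1)*w + k*(k+1)/2 := by
  simp only [mem_Icc] at hw
  have hsplit : Icc 1 k = Icc 1 w ∪ Ioc w k := by
    ext v; simp [mem_Icc, mem_Ioc]; omega
  have hdisj : Disjoint (Icc 1 w) (Ioc w k) := by
    simp [Finset.disjoint_left, mem_Icc, mem_Ioc]; omega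
  rw [hsplit, Finset.sum_union hdisj]
  have h1 : ∑ v ∈ Icc 1 w, |(v:ℝ) - w| = ∑ v ∈ Icc 1 w, ((w:ℝ) - v) := by
    refine Finset.sum_congr rfl fun v hv => ?_
    simp only [mem_Icc] at hv
    rw [abs_of_nonpos (sub_nonpos.mpr (by exact_mod_cast hv.2))]; ring
  have h2 : ∑ v ∈ Ioc w k, |(v:ℝ) - w| = ∑ v ∈ Ioc w k, ((v:ℝ) - w) := by
    refine Finset.sum_congr rfl fun v hv => ?_
    simp only [mem_Ioc] at hv
    rw [abs_of_nonneg (sub_nonneg.mpr (by exact_mod_cast hv.1.le))]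
  have hIoc : ∑ v ∈ Ioc w k, (v:ℝ) = ∑ v ∈ Icc 1 k, (v:ℝ) - ∑ v ∈ Icc 1 w, (v:ℝ) := by
    rw [hsplit, Finset.sum_union hdisj]; ring
  have hc1 : ((Icc 1 w).card : ℝ) = w := by rw [Nat.card_Icc]; simp
  have hc2 : ((Ioc w k).card : ℝ) = (k:ℝ) - w := by
    rw [Nat.card_Ioc]; push_cast [Nat.cast_sub hw.2]; ring
  rw [h1, h2, Finset.sum_sub_distrib, Finset.sum_sub_distrib, Finset.sum_const,
    Finset.sum_const, hIoc, sumId, sumId, nsmul_eq_mul, nsmul_eq_mul, hc1, hc2]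
  ring

lemma sumPoly4 (k : ℕ) (a b c d e : ℝ) :
    ∑ v ∈ Icc 1 k, (a*(v:ℝ)^4 + b*(v:ℝ)^3 + c*(v:ℝ)^2 + d*(v:ℝ) + e)
      = a*(k*(k+1)*(2*k+1)*(3*k^2+3*k-1)/30) + b*(k^2*(k+1)^2/4)
        + c*(k*(k+1)*(2*k+1)/6) + d*(k*(k+1)/2) + e*k := by
  simp only [Finset.sum_add_distrib, ← Finset.mul_sum, Finset.sum_const, Nat.card_Icc,
    nsmul_eq_mul, sumQuart, sumCube, sumSq, sumId]
  simp; ring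

lemma innerAbs (k v : ℕ) (hv : v ∈ Icc 1 k) :
    ∑ w ∈ Icc 1 k, |(v:ℝ) - w| = (v:ℝ)^2 - (k+1)*v + k*(k+1)/2 := by
  rw [show ∑ w ∈ Icc 1 k, |(v:ℝ) - w| = ∑ w ∈ Icc 1 k, |(w:ℝ) - v| from
    Finset.sum_congr rfl fun w _ => abs_sub_comm _ _]
  exact sumAbsW k v hv

lemma sumAbs2 (k : ℕ) :
    ∑ v ∈ Icc 1 k, ∑ w ∈ Icc 1 k, |(v:ℝ) - w| = ((k:ℝ)^3 - k)/3 := by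
  rw [Finset.sum_congr rfl fun v hv => innerAbs k v hv]
  have := sumPoly4 k 0 0 1 (-((k:ℝ)+1)) ((k:ℝ)*(k+1)/2)
  rw [show ∑ v ∈ Icc 1 k, ((v:ℝ)^2 - ((k:ℝ)+1)*v + k*(k+1)/2)
      = ∑ v ∈ Icc 1 k, ((0:ℝ)*(v:ℝ)^4 + 0*(v:ℝ)^3 + 1*(v:ℝ)^2 + (-((k:ℝ)+1))*(v:ℝ)
        + (k:ℝ)*(k+1)/2) from Finset.sum_congr rfl fun v _ => by ring, this]
  ring

lemma sumSqDiff (k : ℕ) :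
    ∑ v ∈ Icc 1 k, ∑ w ∈ Icc 1 k, ((v:ℝ) - w)^2 = (k:ℝ)^2*((k:ℝ)^2-1)/6 := by
  have inner : ∀ v : ℕ, ∑ w ∈ Icc 1 k, ((v:ℝ) - w)^2
      = (k:ℝ)*(v:ℝ)^2 - 2*((k:ℝ)*(k+1)/2)*v + (k:ℝ)*(k+1)*(2*k+1)/6 := by
    intro v
    have := sumPoly4 k 0 0 1 (-(2*(v:ℝ))) ((v:ℝ)^2)
    rw [show ∑ w ∈ Icc 1 k, ((v:ℝ) - w)^2
      = ∑ w ∈ Icc 1 k, ((0:ℝ)*(w:ℝ)^4 + 0*(w:ℝ)^3 + 1*(w:ℝ)^2 + (-(2*(v:ℝ)))*(w:ℝ)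
        + (v:ℝ)^2) from Finset.sum_congr rfl fun w _ => by ring, this]
    ring
  rw [Finset.sum_congr rfl fun v _ => inner v]
  have := sumPoly4 k 0 0 (k:ℝ) (-(2*((k:ℝ)*(k+1)/2))) ((k:ℝ)*(k+1)*(2*k+1)/6)
  rw [show ∑ v ∈ Icc 1 k, ((k:ℝ)*(v:ℝ)^2 - 2*((k:ℝ)*(k+1)/2)*v + (k:ℝ)*(k+1)*(2*k+1)/6)
      = ∑ v ∈ Icc 1 k, ((0:ℝ)*(v:ℝ)^4 + 0*(v:ℝ)^3 + (k:ℝ)*(v:ℝ)^2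
        + (-(2*((k:ℝ)*(k+1)/2)))*(v:ℝ) + (k:ℝ)*(k+1)*(2*k+1)/6) from
    Finset.sum_congr rfl fun v _ => by ring, this]
  ring

lemma sumMulAbs (k : ℕ) :
    ∑ v ∈ Icc 1 k, ∑ w ∈ Icc 1 k, (v:ℝ)*|(v:ℝ) - w| = (k:ℝ)*(k+1)*((k:ℝ)^2-1)/6 := by
  have step : ∀ v ∈ Icc 1 k, ∑ w ∈ Icc 1 k, (v:ℝ)*|(v:ℝ) - w|
      = (v:ℝ)^3 - ((k:ℝ)+1)*(v:ℝ)^2 + ((k:ℝ)*(k+1)/2)*v := by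
    intro v hv
    rw [← Finset.mul_sum, innerAbs k v hv]; ring
  rw [Finset.sum_congr rfl step]
  have := sumPoly4 k 0 1 (-((k:ℝ)+1)) ((k:ℝ)*(k+1)/2) 0
  rw [show ∑ v ∈ Icc 1 k, ((v:ℝ)^3 - ((k:ℝ)+1)*(v:ℝ)^2 + ((k:ℝ)*(k+1)/2)*v)
      = ∑ v ∈ Icc 1 k, ((0:ℝ)*(v:ℝ)^4 + 1*(v:ℝ)^3 + (-((k:ℝ)+1))*(v:ℝ)^2
        + ((k:ℝ)*(k+1)/2)*(v:ℝ) + 0) from Finset.sum_congr rfl fun v _ => by ring, this]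
  ring

lemma sumTriple (k : ℕ) :
    ∑ u ∈ Icc 1 k, ∑ v ∈ Icc 1 k, ∑ w ∈ Icc 1 k, |(v:ℝ) - u| * |(w:ℝ) - v|
      = (7*(k:ℝ)^5 - 15*(k:ℝ)^3 + 8*k)/60 := by
  rw [Finset.sum_comm]
  have step : ∀ v ∈ Icc 1 k, ∑ u ∈ Icc 1 k, ∑ w ∈ Icc 1 k, |(v:ℝ) - u| * |(w:ℝ) - v|
      = ((v:ℝ)^2 - ((k:ℝ)+1)*v + (k:ℝ)*(k+1)/2)^2 := by
    intro v hv
    have : ∑ u ∈ Icc 1 k, ∑ w ∈ Icc 1 k, |(v:ℝ) - u| * |(w:ℝ) - v|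
        = (∑ u ∈ Icc 1 k, |(v:ℝ) - u|) * (∑ w ∈ Icc 1 k, |(w:ℝ) - v|) := by
      rw [Finset.sum_mul]
      exact Finset.sum_congr rfl fun u _ => by rw [Finset.mul_sum]
    rw [this, innerAbs k v hv, sumAbsW k v hv]; ring
  rw [Finset.sum_congr rfl step]
  set c : ℝ := (k:ℝ)*(k+1)/2 with hc
  have := sumPoly4 k 1 (-(2*((k:ℝ)+1))) (((k:ℝ)+1)^2 + 2*c) (-(2*c*((k:ℝ)+1))) (c^2)
  rw [show ∑ v ∈ Icc 1 k, ((v:ℝ)^2 - ((k:ℝ)+1)*v + c)^2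
      = ∑ v ∈ Icc 1 k, ((1:ℝ)*(v:ℝ)^4 + (-(2*((k:ℝ)+1)))*(v:ℝ)^3
        + (((k:ℝ)+1)^2 + 2*c)*(v:ℝ)^2 + (-(2*c*((k:ℝ)+1)))*(v:ℝ) + c^2) from
    Finset.sum_congr rfl fun v _ => by ring, this]
  rw [hc]; ring


end Aux

set_option maxHeartbeats 1000000 in
theorem variance_perimeter_uniform
    {Ω : Type*} [MeasurableSpace Ω] (μ : Measure Ω) [IsProbabilityMeasure μ]
    (k : ℕ) (hk : 2 ≤ k) (n : ℕ) (hn : 3 ≤ n) (x : ℕ → Ω → ℕ)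
    (hmeas : ∀ i, i < n → Measurable (x i))
    (hdist : ∀ i, i < n → Measure.map (x i) μ = unifMeasure k)
    (hindep : iIndepFun (fun i : Fin n => x i) μ) :
    variance (fun ω => (2 * n : ℝ) + (x 0 ω : ℝ) + (x (n - 1) ω : ℝ)
        + ∑ i ∈ Finset.Icc 1 (n - 1), |(x i ω : ℝ) - (x (i - 1) ω : ℝ)|) μ
      = ((4 * (k : ℝ) ^ 4 - 5 * (k : ℝ) ^ 2 + 1)
          + 3 * ((k : ℝ) ^ 4 - 1) * (n : ℝ)) / (45 * (k : ℝ) ^ 2) := by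
  classical
  have hk0 : (k:ℝ) ≠ 0 := Nat.cast_ne_zero.mpr (by omega)
  have h0n : 0 < n := by omega
  have hn1 : n - 1 < n := by omega
  set A : ℝ := ((k:ℝ)+1)/2 with hA
  set Bv : ℝ := ((k:ℝ)+1)*(2*(k:ℝ)+1)/6 with hBv
  set Cc : ℝ := ((k:ℝ)^2-1)/(3*(k:ℝ)) with hCc
  set Dv : ℝ := ((k:ℝ)^2-1)/6 with hDv
  set Ev : ℝ := ((k:ℝ)+1)*((k:ℝ)^2-1)/(6*(k:ℝ)) with hEv
  set Fv : ℝ := (7*(k:ℝ)^4-15*(k:ℝ)^2+8)/(60*(k:ℝ)^2) with hFv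
  set VB : ℝ := Bv - A^2 with hVB
  set VD : ℝ := Dv - Cc^2 with hVD
  set VE : ℝ := Ev - A*Cc with hVE
  set VF : ℝ := Fv - Cc^2 with hVF
  set T : ℕ → Ω → ℝ := fun j ω => if j = 0 then ((x 0 ω : ℕ):ℝ)
    else if j = n then ((x (n-1) ω : ℕ):ℝ)
    else |((x j ω : ℕ):ℝ) - ((x (j-1) ω : ℕ):ℝ)| with hT
  have hT0f : T 0 = fun ω => ((x 0 ω : ℕ):ℝ) := by funext ω; simp [hT]
  have hTnf : T n = fun ω => ((x (n-1) ω : ℕ):ℝ) := by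
    funext ω; simp only [hT]; rw [if_neg (by omega)]; simp
  have hTmf : ∀ j, j ≠ 0 → j ≠ n →
      T j = fun ω => |((x j ω : ℕ):ℝ) - ((x (j-1) ω : ℕ):ℝ)| := by
    intro j h1 h2; funext ω; simp only [hT]; rw [if_neg h1, if_neg h2]
  have hxm : ∀ i, i < n → Measurable (fun ω => ((x i ω : ℕ):ℝ)) := fun i hi =>
    (Measurable.of_discrete (f := fun m : ℕ => (m:ℝ))).comp (hmeas i hi)
  have hTmeas : ∀ j, j ≤ n → Measurable (T j) := by
    intro j hj
    rcases eq_or_ne j 0 with rfl | h0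
    · rw [hT0f]; exact hxm 0 h0n
    rcases eq_or_ne n j with rfl | hn'
    · rw [hTnf]; exact hxm (n-1) hn1
    · rw [hTmf j h0 (by omega)]
      exact ((hxm j (by omega)).sub (hxm (j-1) (by omega))).abs
  have haeALL : ∀ᵐ ω ∂μ, ∀ i ∈ Finset.range n, x i ω ∈ Finset.Icc 1 k := by
    rw [Filter.eventually_all_finset]
    intro i hi
    simp only [Finset.mem_range] at hi
    exact ae_mem_Icc (hmeas i hi) (hdist i hi)
  have hk1 : (1:ℝ) ≤ (k:ℝ) := by exact_mod_cast (by omega : 1 ≤ k)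
  have hTbd : ∀ᵐ ω ∂μ, ∀ j ∈ Finset.range (n+1), |T j ω| ≤ 2*(k:ℝ) := by
    filter_upwards [haeALL] with ω hω
    intro j hj
    simp only [Finset.mem_range] at hj
    have hx : ∀ i, i < n → 1 ≤ ((x i ω : ℕ):ℝ) ∧ ((x i ω : ℕ):ℝ) ≤ (k:ℝ) := by
      intro i hi
      have h := hω i (Finset.mem_range.mpr hi)
      simp only [Finset.mem_Icc] at h
      exact ⟨by exact_mod_cast h.1, by exact_mod_cast h.2⟩
    have habs : ∀ a b : ℝ, 1 ≤ a → a ≤ k → 1 ≤ b → b ≤ k → |a - b| ≤ 2*(k:ℝ) := by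
      intro a b h1 h2 h3 h4
      rw [abs_le]; constructor <;> linarith
    rcases eq_or_ne j 0 with rfl | h0
    · simp only [hT0f]
      have := hx 0 h0n
      rw [abs_of_nonneg (by linarith [this.1])]; linarith [this.2]
    rcases eq_or_ne n j with rfl | hn'
    · simp only [hTnf]
      have := hx (n-1) hn1
      rw [abs_of_nonneg (by linarith [this.1])]; linarith [this.2]
    · simp only [hTmf j h0 (by omega)]
      have h1 := hx j (by omega)
      have h2 := hx (j-1) (by omega)
      rw [abs_abs]
      exact habs _ _ h1.1 h1.2 h2.1 h2.2
  have hTint : ∀ j ∈ Finset.range (n+1), Integrable (T j) μ := by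
    intro j hj
    refine Integrable.mono' (integrable_const (2*(k:ℝ)))
      ((hTmeas j (by simp only [Finset.mem_range] at hj; omega)).aestronglyMeasurable) ?_
    filter_upwards [hTbd] with ω h
    simpa [Real.norm_eq_abs] using h j hj
  have hTTint : ∀ j ∈ Finset.range (n+1), ∀ l ∈ Finset.range (n+1),
      Integrable (fun ω => T j ω * T l ω) μ := by
    intro j hj l hl
    refine Integrable.mono' (integrable_const (2*(k:ℝ)*(2*(k:ℝ))))
      (((hTmeas j (by simp only [Finset.mem_range] at hj; omega)).mul
        (hTmeas l (by simp only [Finset.mem_range] at hl; omega))).aestronglyMeasurable) ?_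
    filter_upwards [hTbd] with ω h
    rw [Real.norm_eq_abs, abs_mul]
    exact mul_le_mul (h j hj) (h l hl) (abs_nonneg _) (by positivity)
  have hpair : ∀ p q, p < n → q < n → p ≠ q → ∀ v w : ℕ,
      μ (x p ⁻¹' {v} ∩ x q ⁻¹' {w}) = μ (x p ⁻¹' {v}) * μ (x q ⁻¹' {w}) := by
    intro p q hp hq hpq v w
    exact (hindep.indepFun (show (⟨p,hp⟩:Fin n) ≠ ⟨q,hq⟩ by
      simp only [ne_eq, Fin.mk.injEq]; omega)).measure_inter_preimage_eq_mul
      {v} {w} .of_discrete .of_discrete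
  have htriple : ∀ p q r, p < n → q < n → r < n → p ≠ q → p ≠ r → q ≠ r → ∀ u v w : ℕ,
      μ (x p ⁻¹' {u} ∩ (x q ⁻¹' {v} ∩ x r ⁻¹' {w}))
        = μ (x p ⁻¹' {u}) * (μ (x q ⁻¹' {v}) * μ (x r ⁻¹' {w})) := by
    intro p q r hp hq hr hpq hpr hqr u v w
    set a : Fin n := ⟨p, hp⟩ with ha
    set b : Fin n := ⟨q, hq⟩ with hb
    set c : Fin n := ⟨r, hr⟩ with hc
    have hab : a ≠ b := by simp only [ha, hb, ne_eq, Fin.mk.injEq]; omega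
    have hac : a ≠ c := by simp only [ha, hc, ne_eq, Fin.mk.injEq]; omega
    have hbc : b ≠ c := by simp only [hb, hc, ne_eq, Fin.mk.injEq]; omega
    set sets : Fin n → Set ℕ := fun i => if i = a then {u} else if i = b then {v} else {w}
      with hsets
    have hsa : sets a = {u} := by simp [hsets]
    have hsb : sets b = {v} := by simp [hsets, hab.symm]
    have hsc : sets c = {w} := by simp [hsets, hac.symm, hbc.symm]
    have H := hindep.measure_inter_preimage_eq_mul ({a, b, c} : Finset (Fin n))
      (sets := sets) (fun i _ => .of_discrete)
    rw [show (⋂ i ∈ ({a, b, c} : Finset (Fin n)), (fun i : Fin n => x i) i ⁻¹' sets i)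
        = x p ⁻¹' {u} ∩ (x q ⁻¹' {v} ∩ x r ⁻¹' {w}) by
      simp [Finset.set_biInter_insert, Finset.set_biInter_singleton, hsa, hsb, hsc]; rfl] at H
    rwa [Finset.prod_insert (by simp [hab, hac]), Finset.prod_insert (by simp [hbc]),
      Finset.prod_singleton, hsa, hsb, hsc] at H
  -- mean values
  have hm : ∀ j, j ≤ n → ∫ ω, T j ω ∂μ = (if j = 0 ∨ j = n then A else Cc) := by
    intro j hj
    rcases eq_or_ne j 0 with rfl | h0
    · rw [if_pos (Or.inl rfl)]
      simp only [hT0f]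
      have h : ∫ ω, ((x 0 ω : ℕ):ℝ) ∂μ = (k:ℝ)⁻¹ * ∑ v ∈ Finset.Icc 1 k, (v:ℝ) :=
        int_one (hmeas 0 h0n) (hdist 0 h0n) (fun v => (v:ℝ))
      rw [h, sumId, hA]; field_simp; try ring
    rcases eq_or_ne n j with rfl | hn'
    · rw [if_pos (Or.inr rfl)]
      simp only [hTnf]
      have h : ∫ ω, ((x (n-1) ω : ℕ):ℝ) ∂μ = (k:ℝ)⁻¹ * ∑ v ∈ Finset.Icc 1 k, (v:ℝ) :=
        int_one (hmeas (n-1) hn1) (hdist (n-1) hn1) (fun v => (v:ℝ))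
      rw [h, sumId, hA]; field_simp; try ring
    · rw [if_neg (by omega)]
      simp only [hTmf j h0 (by omega)]
      have h : ∫ ω, |((x j ω : ℕ):ℝ) - ((x (j-1) ω : ℕ):ℝ)| ∂μ
          = (k:ℝ)⁻¹ * (k:ℝ)⁻¹ * ∑ v ∈ Finset.Icc 1 k, ∑ w ∈ Finset.Icc 1 k,
            |(v:ℝ) - (w:ℝ)| :=
        int_pair (hmeas j (by omega)) (hmeas (j-1) (by omega)) (hdist j (by omega))
          (hdist (j-1) (by omega)) (hpair j (j-1) (by omega) (by omega) (by omega))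
          (fun v w => |(v:ℝ) - (w:ℝ)|)
      rw [h, sumAbs2, hCc]; field_simp
  -- second moments
  have hsq : ∀ i, i < n → ∫ ω, ((x i ω : ℕ):ℝ) * ((x i ω : ℕ):ℝ) ∂μ = Bv := by
    intro i hi
    have h : ∫ ω, ((x i ω : ℕ):ℝ) * ((x i ω : ℕ):ℝ) ∂μ
        = (k:ℝ)⁻¹ * ∑ v ∈ Finset.Icc 1 k, ((v:ℝ) * (v:ℝ)) :=
      int_one (hmeas i hi) (hdist i hi) (fun v => (v:ℝ) * (v:ℝ))
    rw [h, show ∑ v ∈ Finset.Icc 1 k, ((v:ℝ) * (v:ℝ)) = ∑ v ∈ Finset.Icc 1 k, (v:ℝ)^2 from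
      Finset.sum_congr rfl fun v _ => by ring, sumSq, hBv]
    field_simp
  have hDsq : ∀ j, 1 ≤ j → j ≤ n-1 →
      ∫ ω, |((x j ω : ℕ):ℝ) - ((x (j-1) ω : ℕ):ℝ)|
        * |((x j ω : ℕ):ℝ) - ((x (j-1) ω : ℕ):ℝ)| ∂μ = Dv := by
    intro j h1 h2
    have h : ∫ ω, |((x j ω : ℕ):ℝ) - ((x (j-1) ω : ℕ):ℝ)|
          * |((x j ω : ℕ):ℝ) - ((x (j-1) ω : ℕ):ℝ)| ∂μ
        = (k:ℝ)⁻¹ * (k:ℝ)⁻¹ * ∑ v ∈ Finset.Icc 1 k, ∑ w ∈ Finset.Icc 1 k,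
          (|(v:ℝ) - (w:ℝ)| * |(v:ℝ) - (w:ℝ)|) :=
      int_pair (hmeas j (by omega)) (hmeas (j-1) (by omega)) (hdist j (by omega))
        (hdist (j-1) (by omega)) (hpair j (j-1) (by omega) (by omega) (by omega))
        (fun v w => |(v:ℝ) - (w:ℝ)| * |(v:ℝ) - (w:ℝ)|)
    rw [h, show ∑ v ∈ Finset.Icc 1 k, ∑ w ∈ Finset.Icc 1 k,
        (|(v:ℝ) - (w:ℝ)| * |(v:ℝ) - (w:ℝ)|)
        = ∑ v ∈ Finset.Icc 1 k, ∑ w ∈ Finset.Icc 1 k, ((v:ℝ) - (w:ℝ))^2 from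
      Finset.sum_congr rfl fun v _ => Finset.sum_congr rfl fun w _ => by
        rw [abs_mul_abs_self]; ring, sumSqDiff, hDv]
    field_simp
  have hxD : ∫ ω, ((x 0 ω : ℕ):ℝ) * |((x 1 ω : ℕ):ℝ) - ((x 0 ω : ℕ):ℝ)| ∂μ = Ev := by
    have h : ∫ ω, ((x 0 ω : ℕ):ℝ) * |((x 1 ω : ℕ):ℝ) - ((x 0 ω : ℕ):ℝ)| ∂μ
        = (k:ℝ)⁻¹ * (k:ℝ)⁻¹ * ∑ v ∈ Finset.Icc 1 k, ∑ w ∈ Finset.Icc 1 k,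
          ((v:ℝ) * |(w:ℝ) - (v:ℝ)|) :=
      int_pair (hmeas 0 h0n) (hmeas 1 (by omega)) (hdist 0 h0n) (hdist 1 (by omega))
        (hpair 0 1 h0n (by omega) (by omega)) (fun v w => (v:ℝ) * |(w:ℝ) - (v:ℝ)|)
    rw [h, show ∑ v ∈ Finset.Icc 1 k, ∑ w ∈ Finset.Icc 1 k, ((v:ℝ) * |(w:ℝ) - (v:ℝ)|)
        = ∑ v ∈ Finset.Icc 1 k, ∑ w ∈ Finset.Icc 1 k, ((v:ℝ) * |(v:ℝ) - (w:ℝ)|) from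
      Finset.sum_congr rfl fun v _ => Finset.sum_congr rfl fun w _ => by
        rw [abs_sub_comm], sumMulAbs, hEv]
    field_simp
  have hDx : ∫ ω, |((x (n-1) ω : ℕ):ℝ) - ((x (n-2) ω : ℕ):ℝ)| * ((x (n-1) ω : ℕ):ℝ) ∂μ
      = Ev := by
    have h : ∫ ω, |((x (n-1) ω : ℕ):ℝ) - ((x (n-2) ω : ℕ):ℝ)| * ((x (n-1) ω : ℕ):ℝ) ∂μ
        = (k:ℝ)⁻¹ * (k:ℝ)⁻¹ * ∑ v ∈ Finset.Icc 1 k, ∑ w ∈ Finset.Icc 1 k,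
          (|(v:ℝ) - (w:ℝ)| * (v:ℝ)) :=
      int_pair (hmeas (n-1) hn1) (hmeas (n-2) (by omega)) (hdist (n-1) hn1)
        (hdist (n-2) (by omega)) (hpair (n-1) (n-2) hn1 (by omega) (by omega))
        (fun v w => |(v:ℝ) - (w:ℝ)| * (v:ℝ))
    rw [h, show ∑ v ∈ Finset.Icc 1 k, ∑ w ∈ Finset.Icc 1 k, (|(v:ℝ) - (w:ℝ)| * (v:ℝ))
        = ∑ v ∈ Finset.Icc 1 k, ∑ w ∈ Finset.Icc 1 k, ((v:ℝ) * |(v:ℝ) - (w:ℝ)|) from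
      Finset.sum_congr rfl fun v _ => Finset.sum_congr rfl fun w _ => by
        rw [mul_comm], sumMulAbs, hEv]
    field_simp
  have hDD : ∀ j, 1 ≤ j → j ≤ n-2 →
      ∫ ω, |((x j ω : ℕ):ℝ) - ((x (j-1) ω : ℕ):ℝ)|
        * |((x (j+1) ω : ℕ):ℝ) - ((x j ω : ℕ):ℝ)| ∂μ = Fv := by
    intro j h1 h2
    have h : ∫ ω, |((x j ω : ℕ):ℝ) - ((x (j-1) ω : ℕ):ℝ)|
          * |((x (j+1) ω : ℕ):ℝ) - ((x j ω : ℕ):ℝ)| ∂μ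
        = (k:ℝ)⁻¹ * ((k:ℝ)⁻¹ * (k:ℝ)⁻¹) * ∑ u ∈ Finset.Icc 1 k, ∑ v ∈ Finset.Icc 1 k,
            ∑ w ∈ Finset.Icc 1 k, (|(v:ℝ) - (u:ℝ)| * |(w:ℝ) - (v:ℝ)|) :=
      int_triple (hmeas (j-1) (by omega)) (hmeas j (by omega)) (hmeas (j+1) (by omega))
        (hdist (j-1) (by omega)) (hdist j (by omega)) (hdist (j+1) (by omega))
        (htriple (j-1) j (j+1) (by omega) (by omega) (by omega) (by omega) (by omega)
          (by omega))
        (fun u v w => |(v:ℝ) - (u:ℝ)| * |(w:ℝ) - (v:ℝ)|)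
    rw [h, sumTriple, hFv]
    field_simp
  -- independence for non-adjacent indices
  have hXFin : ∀ i : Fin n, Measurable ((fun i : Fin n => x i) i) := fun i => hmeas i i.2
  have zkey : ∀ a b, a < b → b ≤ n → b ≠ a + 1 →
      ∫ ω, T a ω * T b ω ∂μ = (∫ ω, T a ω ∂μ) * (∫ ω, T b ω ∂μ) := by
    intro a b hab hbn hnadj
    have hIab : IndepFun (T a) (T b) μ := by
      rcases eq_or_ne a 0 with rfl | ha0
      · rcases eq_or_ne n b with rfl | hbn'
        · rw [hT0f, hTnf]
          exact (hindep.indepFun (show (⟨0,h0n⟩:Fin n) ≠ ⟨n-1,hn1⟩ by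
            simp only [ne_eq, Fin.mk.injEq]; omega)).comp
            (Measurable.of_discrete (f := fun m : ℕ => (m:ℝ)))
            (Measurable.of_discrete (f := fun m : ℕ => (m:ℝ)))
        · rw [hT0f, hTmf b (by omega) (by omega)]
          have h := (hindep.indepFun_prodMk hXFin ⟨b-1, by omega⟩ ⟨b, by omega⟩ ⟨0, h0n⟩
            (by simp only [ne_eq, Fin.mk.injEq]; omega)
            (by simp only [ne_eq, Fin.mk.injEq]; omega)).symm
          exact h.comp (φ := fun m : ℕ => (m:ℝ))
            (ψ := fun p : ℕ × ℕ => |((p.2:ℕ):ℝ) - ((p.1:ℕ):ℝ)|)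
            Measurable.of_discrete Measurable.of_discrete
      · rcases eq_or_ne n b with rfl | hbn'
        · rw [hTmf a ha0 (by omega), hTnf]
          have h := hindep.indepFun_prodMk hXFin ⟨a-1, by omega⟩ ⟨a, by omega⟩
            ⟨n-1, hn1⟩ (by simp only [ne_eq, Fin.mk.injEq]; omega)
            (by simp only [ne_eq, Fin.mk.injEq]; omega)
          exact h.comp (φ := fun p : ℕ × ℕ => |((p.2:ℕ):ℝ) - ((p.1:ℕ):ℝ)|)
            (ψ := fun m : ℕ => (m:ℝ)) Measurable.of_discrete Measurable.of_discrete
        · rw [hTmf a ha0 (by omega), hTmf b (by omega) (by omega)]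
          have h := hindep.indepFun_prodMk_prodMk hXFin ⟨a-1, by omega⟩ ⟨a, by omega⟩
            ⟨b-1, by omega⟩ ⟨b, by omega⟩
            (by simp only [ne_eq, Fin.mk.injEq]; omega)
            (by simp only [ne_eq, Fin.mk.injEq]; omega)
            (by simp only [ne_eq, Fin.mk.injEq]; omega)
            (by simp only [ne_eq, Fin.mk.injEq]; omega)
          exact h.comp (φ := fun p : ℕ × ℕ => |((p.2:ℕ):ℝ) - ((p.1:ℕ):ℝ)|)
            (ψ := fun p : ℕ × ℕ => |((p.2:ℕ):ℝ) - ((p.1:ℕ):ℝ)|)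
            Measurable.of_discrete Measurable.of_discrete
    exact hIab.integral_fun_mul_eq_mul_integral
      (hTint a (by simp only [Finset.mem_range]; omega)).aestronglyMeasurable
      (hTint b (by simp only [Finset.mem_range]; omega)).aestronglyMeasurable
  -- the covariance case analysis
  set Gd : ℕ → ℕ → ℝ := fun j l =>
    (if j = l then (if j = 0 ∨ j = n then VB else VD) else 0)
      + (if l = j + 1 ∨ j = l + 1 then
          (if j + l = 1 ∨ j + l = 2*n - 1 then VE else VF) else 0) with hGd
  have hadjcase : ∀ j, j + 1 ≤ n →
      ∫ ω, T j ω * T (j+1) ω ∂μ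
        = (∫ ω, T j ω ∂μ) * (∫ ω, T (j+1) ω ∂μ)
          + (if j = 0 ∨ j = n - 1 then VE else VF) := by
    intro j hj
    rcases eq_or_ne j 0 with rfl | h0
    · rw [if_pos (show (0:ℕ) = 0 ∨ (0:ℕ) = n - 1 from Or.inl rfl), hm 0 (by omega),
        hm 1 (by omega), if_pos (show (0:ℕ) = 0 ∨ (0:ℕ) = n from Or.inl rfl),
        if_neg (show ¬((1:ℕ) = 0 ∨ 1 = n) by omega)]
      simp only [hT0f, hTmf 1 (by omega) (by omega), show (1:ℕ) - 1 = 0 from rfl]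
      rw [hxD, hVE]; ring
    rcases eq_or_ne j (n-1) with rfl | hjn
    · rw [if_pos (show n - 1 = 0 ∨ n - 1 = n - 1 from Or.inr rfl),
        show (n-1)+1 = n by omega, hm (n-1) (by omega), hm n (by omega),
        if_neg (show ¬(n - 1 = 0 ∨ n - 1 = n) by omega),
        if_pos (show n = 0 ∨ n = n from Or.inr rfl)]
      simp only [hTmf (n-1) (by omega) (by omega), hTnf, show (n-1)-1 = n-2 by omega]
      rw [hDx, hVE]; ring
    · rw [if_neg (show ¬(j = 0 ∨ j = n - 1) by omega), hm j (by omega),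
        hm (j+1) (by omega), if_neg (show ¬(j = 0 ∨ j = n) by omega),
        if_neg (show ¬(j + 1 = 0 ∨ j + 1 = n) by omega)]
      simp only [hTmf j h0 (by omega), hTmf (j+1) (by omega) (by omega),
        show ∀ j:ℕ, (j+1)-1 = j from fun _ => rfl]
      rw [hDD j (by omega) (by omega), hVF]; ring
  have hG : ∀ j ∈ Finset.range (n+1), ∀ l ∈ Finset.range (n+1),
      ∫ ω, T j ω * T l ω ∂μ = (∫ ω, T j ω ∂μ) * (∫ ω, T l ω ∂μ) + Gd j l := by
    intro j hj l hl
    simp only [Finset.mem_range] at hj hl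
    simp only [hGd]
    rcases eq_or_ne j l with rfl | hjl
    · rw [if_pos rfl, if_neg (show ¬(j = j + 1 ∨ j = j + 1) by omega)]
      rcases eq_or_ne j 0 with rfl | h0
      · rw [if_pos (Or.inl rfl), hm 0 (by omega), if_pos (Or.inl rfl)]
        simp only [hT0f]
        rw [hsq 0 h0n, hVB]; ring
      rcases eq_or_ne n j with rfl | hn'
      · rw [if_pos (Or.inr rfl), hm n (by omega), if_pos (Or.inr rfl)]
        simp only [hTnf]
        rw [hsq (n-1) hn1, hVB]; ring
      · rw [if_neg (show ¬(j = 0 ∨ j = n) by omega), hm j (by omega),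
          if_neg (show ¬(j = 0 ∨ j = n) by omega)]
        simp only [hTmf j h0 (by omega)]
        rw [hDsq j (by omega) (by omega), hVD]; ring
    · rw [if_neg hjl]
      by_cases hadj : l = j + 1 ∨ j = l + 1
      · rw [if_pos hadj]
        rcases hadj with rfl | rfl
        · rw [hadjcase j (by omega)]
          by_cases hc : j = 0 ∨ j = n - 1
          · rw [if_pos hc, if_pos (show j + (j+1) = 1 ∨ j + (j+1) = 2*n - 1 by omega)]
            ring
          · rw [if_neg hc, if_neg (show ¬(j + (j+1) = 1 ∨ j + (j+1) = 2*n - 1) by omega)]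
            ring
        · have comm : ∫ ω, T (l+1) ω * T l ω ∂μ = ∫ ω, T l ω * T (l+1) ω ∂μ :=
            integral_congr_ae (Filter.Eventually.of_forall fun ω => mul_comm _ _)
          rw [comm, hadjcase l (by omega)]
          by_cases hc : l = 0 ∨ l = n - 1
          · rw [if_pos hc, if_pos (show l + 1 + l = 1 ∨ l + 1 + l = 2*n - 1 by omega)]
            ring
          · rw [if_neg hc, if_neg (show ¬(l + 1 + l = 1 ∨ l + 1 + l = 2*n - 1) by omega)]
            ring
      · rw [if_neg hadj]
        rcases Nat.lt_or_ge j l with hlt | hge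
        · rw [zkey j l hlt (by omega) (by omega)]; ring
        · have hlt : l < j := by omega
          have comm : ∫ ω, T j ω * T l ω ∂μ = ∫ ω, T l ω * T j ω ∂μ :=
            integral_congr_ae (Filter.Eventually.of_forall fun ω => mul_comm _ _)
          rw [comm, zkey l j hlt (by omega) (by omega)]; ring
  -- combinatorial sum of Gd
  have hGsum : ∑ j ∈ Finset.range (n+1), ∑ l ∈ Finset.range (n+1), Gd j l
      = ((n:ℝ)+1)*VD + 2*(VB-VD) + 2*((n:ℝ)*VF + 2*(VE-VF)) := by
    simp only [hGd]
    rw [show (∑ j ∈ Finset.range (n+1), ∑ l ∈ Finset.range (n+1),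
        ((if j = l then (if j = 0 ∨ j = n then VB else VD) else 0)
          + (if l = j + 1 ∨ j = l + 1 then
              (if j + l = 1 ∨ j + l = 2*n - 1 then VE else VF) else 0)))
        = (∑ j ∈ Finset.range (n+1), ∑ l ∈ Finset.range (n+1),
            (if j = l then (if j = 0 ∨ j = n then VB else VD) else 0))
          + (∑ j ∈ Finset.range (n+1), ∑ l ∈ Finset.range (n+1),
            (if l = j + 1 ∨ j = l + 1 then
              (if j + l = 1 ∨ j + l = 2*n - 1 then VE else VF) else 0)) by
      rw [← Finset.sum_add_distrib]
      exact Finset.sum_congr rfl fun j _ => by rw [← Finset.sum_add_distrib]]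
    have part1 : ∑ j ∈ Finset.range (n+1), ∑ l ∈ Finset.range (n+1),
        (if j = l then (if j = 0 ∨ j = n then VB else VD) else 0)
        = ((n:ℝ)+1)*VD + 2*(VB-VD) := by
      have hin : ∀ j ∈ Finset.range (n+1), ∑ l ∈ Finset.range (n+1),
          (if j = l then (if j = 0 ∨ j = n then VB else VD) else 0)
          = (if j = 0 ∨ j = n then VB else VD) := by
        intro j hj
        rw [Finset.sum_ite_eq (Finset.range (n+1)) j
          (fun _ => if j = 0 ∨ j = n then VB else VD), if_pos hj]
      rw [Finset.sum_congr rfl hin]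
      have hsplit : ∀ j ∈ Finset.range (n+1), (if j = 0 ∨ j = n then VB else VD)
          = VD + ((if j = 0 then VB - VD else 0) + (if j = n then VB - VD else 0)) := by
        intro j hj
        rcases eq_or_ne j 0 with rfl | h0
        · rw [if_pos (show (0:ℕ) = 0 ∨ (0:ℕ) = n from Or.inl rfl), if_pos rfl,
            if_neg (by omega)]
          ring
        rcases eq_or_ne n j with rfl | hn2
        · rw [if_pos (show n = 0 ∨ n = n from Or.inr rfl), if_neg (by omega), if_pos rfl]
          ring
        · rw [if_neg (show ¬(j = 0 ∨ j = n) by omega), if_neg h0, if_neg (by omega)]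
          ring
      rw [Finset.sum_congr rfl hsplit, Finset.sum_add_distrib, Finset.sum_add_distrib,
        Finset.sum_const, Finset.card_range, Finset.sum_ite_eq' (Finset.range (n+1)) 0
          (fun _ => VB - VD), Finset.sum_ite_eq' (Finset.range (n+1)) n
          (fun _ => VB - VD), if_pos (by simp), if_pos (by simp), nsmul_eq_mul]
      push_cast; ring
    have subsum : ∀ c : ℕ → ℕ, (∀ j, j < n → c j = 2*j+1) →
        ∑ j ∈ Finset.range (n+1), (if j + 1 ∈ Finset.range (n+1)
            then (if c j = 1 ∨ c j = 2*n - 1 then VE else VF) else 0)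
          = (n:ℝ)*VF + 2*(VE-VF) := by
      intro c hc
      rw [← Finset.sum_subset (Finset.range_subset_range.mpr (Nat.le_succ n))
        (fun x hx hx2 => by
          rw [if_neg]
          simp only [Finset.mem_range] at hx hx2 ⊢
          omega)]
      have step : ∀ j ∈ Finset.range n, (if j + 1 ∈ Finset.range (n+1)
            then (if c j = 1 ∨ c j = 2*n - 1 then VE else VF) else 0)
          = VF + ((if j = 0 then VE - VF else 0) + (if j = n-1 then VE - VF else 0)) := by
        intro j hj
        simp only [Finset.mem_range] at hj
        rw [if_pos (by simp only [Finset.mem_range]; omega), hc j hj]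
        rcases eq_or_ne j 0 with rfl | h0
        · rw [if_pos (show 2*0+1 = 1 ∨ 2*0+1 = 2*n - 1 from Or.inl rfl), if_pos rfl,
            if_neg (by omega)]
          ring
        rcases eq_or_ne j (n-1) with rfl | h1
        · rw [if_pos (show 2*(n-1)+1 = 1 ∨ 2*(n-1)+1 = 2*n - 1 by omega),
            if_neg h0, if_pos rfl]
          ring
        · rw [if_neg (show ¬(2*j+1 = 1 ∨ 2*j+1 = 2*n - 1) by omega), if_neg h0,
            if_neg h1]
          ring
      rw [Finset.sum_congr rfl step, Finset.sum_add_distrib, Finset.sum_add_distrib,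
        Finset.sum_const, Finset.card_range, Finset.sum_ite_eq' (Finset.range n) 0
          (fun _ => VE - VF), Finset.sum_ite_eq' (Finset.range n) (n-1)
          (fun _ => VE - VF), if_pos (by simp only [Finset.mem_range]; omega),
        if_pos (by simp only [Finset.mem_range]; omega), nsmul_eq_mul]
      ring
    have part2 : ∑ j ∈ Finset.range (n+1), ∑ l ∈ Finset.range (n+1),
        (if l = j + 1 ∨ j = l + 1 then
          (if j + l = 1 ∨ j + l = 2*n - 1 then VE else VF) else 0)
        = 2*((n:ℝ)*VF + 2*(VE-VF)) := by
      have hsplit : ∀ j l : ℕ, (if l = j + 1 ∨ j = l + 1 then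
            (if j + l = 1 ∨ j + l = 2*n - 1 then VE else VF) else 0)
          = (if l = j + 1 then (if j + l = 1 ∨ j + l = 2*n - 1 then VE else VF) else 0)
            + (if j = l + 1 then (if j + l = 1 ∨ j + l = 2*n - 1 then VE else VF)
                else 0) := by
        intro j l
        rcases eq_or_ne l (j+1) with rfl | hc1
        · rw [if_pos (Or.inl rfl), if_pos rfl, if_neg (show ¬(j = j + 1 + 1) by omega)]
          ring
        rcases eq_or_ne j (l+1) with rfl | hc2
        · rw [if_pos (Or.inr rfl), if_neg hc1, if_pos rfl]; ring
        · rw [if_neg (show ¬(l = j + 1 ∨ j = l + 1) by omega), if_neg hc1, if_neg hc2]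
          ring
      rw [show (∑ j ∈ Finset.range (n+1), ∑ l ∈ Finset.range (n+1),
          (if l = j + 1 ∨ j = l + 1 then
            (if j + l = 1 ∨ j + l = 2*n - 1 then VE else VF) else 0))
          = (∑ j ∈ Finset.range (n+1), ∑ l ∈ Finset.range (n+1),
              (if l = j + 1 then (if j + l = 1 ∨ j + l = 2*n - 1 then VE else VF) else 0))
            + (∑ j ∈ Finset.range (n+1), ∑ l ∈ Finset.range (n+1),
              (if j = l + 1 then (if j + l = 1 ∨ j + l = 2*n - 1 then VE else VF)
                else 0)) by
        rw [← Finset.sum_add_distrib]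
        refine Finset.sum_congr rfl fun j _ => ?_
        rw [← Finset.sum_add_distrib]
        exact Finset.sum_congr rfl fun l _ => hsplit j l]
      have s1 : ∑ j ∈ Finset.range (n+1), ∑ l ∈ Finset.range (n+1),
          (if l = j + 1 then (if j + l = 1 ∨ j + l = 2*n - 1 then VE else VF) else 0)
          = (n:ℝ)*VF + 2*(VE-VF) := by
        have hin : ∀ j, ∑ l ∈ Finset.range (n+1),
            (if l = j + 1 then (if j + l = 1 ∨ j + l = 2*n - 1 then VE else VF) else 0)
            = (if j + 1 ∈ Finset.range (n+1)
                then (if j + (j+1) = 1 ∨ j + (j+1) = 2*n - 1 then VE else VF) else 0) :=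
          fun j => Finset.sum_ite_eq' (Finset.range (n+1)) (j+1)
            (fun l => if j + l = 1 ∨ j + l = 2*n - 1 then VE else VF)
        rw [Finset.sum_congr rfl fun j _ => hin j]
        exact subsum (fun j => j + (j+1)) (fun j _ => by show j + (j+1) = 2*j+1; omega)
      have s2 : ∑ j ∈ Finset.range (n+1), ∑ l ∈ Finset.range (n+1),
          (if j = l + 1 then (if j + l = 1 ∨ j + l = 2*n - 1 then VE else VF) else 0)
          = (n:ℝ)*VF + 2*(VE-VF) := by
        rw [Finset.sum_comm]
        have hin : ∀ l, ∑ j ∈ Finset.range (n+1),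
            (if j = l + 1 then (if j + l = 1 ∨ j + l = 2*n - 1 then VE else VF) else 0)
            = (if l + 1 ∈ Finset.range (n+1)
                then (if (l+1) + l = 1 ∨ (l+1) + l = 2*n - 1 then VE else VF) else 0) :=
          fun l => Finset.sum_ite_eq' (Finset.range (n+1)) (l+1)
            (fun j => if j + l = 1 ∨ j + l = 2*n - 1 then VE else VF)
        rw [Finset.sum_congr rfl fun l _ => hin l]
        exact subsum (fun l => (l+1) + l) (fun l _ => by show (l+1) + l = 2*l+1; omega)
      rw [s1, s2]; ring
    rw [part1, part2]
  -- main function rewrite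
  have hWrw : (fun ω => (2 * n : ℝ) + (x 0 ω : ℝ) + (x (n - 1) ω : ℝ)
        + ∑ i ∈ Finset.Icc 1 (n - 1), |(x i ω : ℝ) - (x (i - 1) ω : ℝ)|)
      = fun ω => 2*(n:ℝ) + ∑ j ∈ Finset.range (n+1), T j ω := by
    funext ω
    have hsetEq : Finset.range (n+1) = insert 0 (insert n (Finset.Icc 1 (n-1))) := by
      ext a
      simp only [Finset.mem_range, Finset.mem_insert, Finset.mem_Icc]
      omega
    rw [hsetEq, Finset.sum_insert (by simp only [Finset.mem_insert, Finset.mem_Icc]; omega),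
      Finset.sum_insert (by simp only [Finset.mem_Icc]; omega)]
    rw [show T 0 ω = ((x 0 ω : ℕ):ℝ) by rw [hT0f],
      show T n ω = ((x (n-1) ω : ℕ):ℝ) by rw [hTnf]]
    rw [show (∑ i ∈ Finset.Icc 1 (n-1), T i ω)
        = ∑ i ∈ Finset.Icc 1 (n-1), |((x i ω : ℕ):ℝ) - ((x (i-1) ω : ℕ):ℝ)| from
      Finset.sum_congr rfl (fun i hi => by
        rw [hTmf i (by simp only [Finset.mem_Icc] at hi; omega)
          (by simp only [Finset.mem_Icc] at hi; omega)])]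
    ring
  rw [hWrw]
  -- Memℒp and variance
  have hSmeas : Measurable (fun ω => 2*(n:ℝ) + ∑ j ∈ Finset.range (n+1), T j ω) :=
    measurable_const.add (Finset.measurable_sum _ (fun j hj =>
      hTmeas j (by simp only [Finset.mem_range] at hj; omega)))
  have hWbd : ∀ᵐ ω ∂μ, ‖2*(n:ℝ) + ∑ j ∈ Finset.range (n+1), T j ω‖
      ≤ 2*(n:ℝ) + ((n:ℝ)+1)*(2*(k:ℝ)) := by
    filter_upwards [hTbd] with ω h
    rw [Real.norm_eq_abs]
    calc |2*(n:ℝ) + ∑ j ∈ Finset.range (n+1), T j ω|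
        ≤ |2*(n:ℝ)| + |∑ j ∈ Finset.range (n+1), T j ω| := abs_add_le _ _
      _ ≤ 2*(n:ℝ) + ∑ j ∈ Finset.range (n+1), |T j ω| := by
          gcongr
          · rw [abs_of_nonneg (by positivity)]
          · exact Finset.abs_sum_le_sum_abs _ _
      _ ≤ 2*(n:ℝ) + ((n:ℝ)+1)*(2*(k:ℝ)) := by
          gcongr
          calc ∑ j ∈ Finset.range (n+1), |T j ω| ≤ ∑ j ∈ Finset.range (n+1), 2*(k:ℝ) :=
                Finset.sum_le_sum h
            _ = ((n:ℝ)+1)*(2*(k:ℝ)) := by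
                rw [Finset.sum_const, Finset.card_range, nsmul_eq_mul]; push_cast; ring
  have hMem : MemLp (fun ω => 2*(n:ℝ) + ∑ j ∈ Finset.range (n+1), T j ω) 2 μ :=
    MemLp.of_bound hSmeas.aestronglyMeasurable _ hWbd
  rw [variance_eq_sub hMem]
  -- compute the integrals
  have hSint : Integrable (fun ω => ∑ j ∈ Finset.range (n+1), T j ω) μ :=
    integrable_finset_sum _ (fun j hj => hTint j hj)
  have hEW : ∫ ω, (2*(n:ℝ) + ∑ j ∈ Finset.range (n+1), T j ω) ∂μ
      = 2*(n:ℝ) + ∑ j ∈ Finset.range (n+1), ∫ ω, T j ω ∂μ := by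
    rw [integral_add (integrable_const _) hSint, integral_const, measureReal_def, measure_univ,
      ENNReal.toReal_one, one_smul, integral_finset_sum _ (fun j hj => hTint j hj)]
  have e1 : (fun ω => 2*(n:ℝ) + ∑ j ∈ Finset.range (n+1), T j ω) ^ 2
      = fun ω => ((2*(n:ℝ))^2 + 2*(2*(n:ℝ))*(∑ j ∈ Finset.range (n+1), T j ω)
        + ∑ j ∈ Finset.range (n+1), ∑ l ∈ Finset.range (n+1), T j ω * T l ω) := by
    funext ω
    rw [Pi.pow_apply, ← Finset.sum_mul_sum]
    ring
  have hEW2 : ∫ ω, ((fun ω => 2*(n:ℝ) + ∑ j ∈ Finset.range (n+1), T j ω) ^ 2) ω ∂μ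
      = (2*(n:ℝ))^2 + 2*(2*(n:ℝ))*(∑ j ∈ Finset.range (n+1), ∫ ω, T j ω ∂μ)
        + ∑ j ∈ Finset.range (n+1), ∑ l ∈ Finset.range (n+1), ∫ ω, T j ω * T l ω ∂μ := by
    simp only [e1]
    rw [integral_add (show Integrable (fun ω => (2*(n:ℝ))^2
        + 2*(2*(n:ℝ)) * ∑ j ∈ Finset.range (n+1), T j ω) μ from
        (integrable_const _).add (hSint.const_mul _))
      (integrable_finset_sum _ (fun j hj => integrable_finset_sum _ (fun l hl =>
        hTTint j hj l hl))),
      integral_add (integrable_const _)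
        (show Integrable (fun ω => 2*(2*(n:ℝ)) * ∑ j ∈ Finset.range (n+1), T j ω) μ from
          hSint.const_mul _),
      integral_const, measureReal_def, measure_univ, ENNReal.toReal_one, one_smul,
      integral_const_mul, integral_finset_sum _ (fun j hj => hTint j hj),
      integral_finset_sum _ (fun j hj => integrable_finset_sum _ (fun l hl =>
        hTTint j hj l hl))]
    congr 1
    exact Finset.sum_congr rfl fun j hj =>
      integral_finset_sum _ (fun l hl => hTTint j hj l hl)
  have hPP : ∑ j ∈ Finset.range (n+1), ∑ l ∈ Finset.range (n+1), ∫ ω, T j ω * T l ω ∂μ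
      = (∑ j ∈ Finset.range (n+1), ∫ ω, T j ω ∂μ)
          * (∑ l ∈ Finset.range (n+1), ∫ ω, T l ω ∂μ)
        + ∑ j ∈ Finset.range (n+1), ∑ l ∈ Finset.range (n+1), Gd j l := by
    rw [Finset.sum_mul_sum, ← Finset.sum_add_distrib]
    refine Finset.sum_congr rfl fun j hj => ?_
    rw [← Finset.sum_add_distrib]
    exact Finset.sum_congr rfl fun l hl => hG j hj l hl
  rw [hEW2, hEW, hPP, hGsum]
  rw [hVB, hVD, hVE, hVF, hA, hBv, hCc, hDv, hEv, hFv]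
  field_simp
  ring
end

section
/- Let k ≥ 2 be an integer and let x₀, x₁, x₂ be i.i.d. random variables uniformly distributed on {1, 2, ..., k}. Then E(|x₁ - x₀| · |x₂ - x₁|) = (k - 1)(k + 1)(7k² - 8)/(60k²). -/
open MeasureTheory ProbabilityTheory
open scoped ENNReal

lemma my_integrable_dirac {α : Type*} [MeasurableSpace α] [Countable α]
    [MeasurableSingletonClass α] (f : α → ℝ) (a : α) :
    Integrable f (Measure.dirac a) := by
  refine ⟨(measurable_of_countable f).aestronglyMeasurable, ?_⟩
  simp [HasFiniteIntegral, lintegral_dirac]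

lemma my_integral_sum_dirac {α : Type*} [MeasurableSpace α] [Countable α]
    [MeasurableSingletonClass α] (s : Finset α) (c : ℝ≥0∞) (f : α → ℝ) :
    ∫ a, f a ∂(c • ∑ i ∈ s, Measure.dirac i) = c.toReal * ∑ i ∈ s, f i := by
  rw [integral_smul_measure, integral_finset_sum_measure (fun i _ => my_integrable_dirac f i)]
  simp [integral_dirac]

lemma my_finite_sum {α ι : Type*} [MeasurableSpace α] (s : Finset ι) (μ : ι → Measure α)
    [∀ i, IsFiniteMeasure (μ i)] : IsFiniteMeasure (∑ i ∈ s, μ i) := by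
  constructor
  rw [Measure.finset_sum_apply]
  exact ENNReal.sum_lt_top.2 fun i _ => measure_lt_top _ _

lemma my_smul_prod {α β : Type*} [MeasurableSpace α] [MeasurableSpace β]
    (c : ℝ≥0∞) (hc : c ≠ ∞) (μ : Measure α) (ν : Measure β)
    [IsFiniteMeasure μ] [IsFiniteMeasure ν] :
    (c • μ).prod ν = c • μ.prod ν := by
  haveI : IsFiniteMeasure (c • μ) := by
    constructor
    simp only [Measure.smul_apply, smul_eq_mul]
    exact ENNReal.mul_lt_top hc.lt_top (measure_lt_top μ _)
  refine Measure.prod_eq fun s t hs ht => ?_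
  simp [Measure.prod_prod, mul_assoc]

lemma my_prod_smul {α β : Type*} [MeasurableSpace α] [MeasurableSpace β]
    (c : ℝ≥0∞) (hc : c ≠ ∞) (μ : Measure α) (ν : Measure β)
    [IsFiniteMeasure μ] [IsFiniteMeasure ν] :
    μ.prod (c • ν) = c • μ.prod ν := by
  haveI : IsFiniteMeasure (c • ν) := by
    constructor
    simp only [Measure.smul_apply, smul_eq_mul]
    exact ENNReal.mul_lt_top hc.lt_top (measure_lt_top ν _)
  refine Measure.prod_eq fun s t hs ht => ?_
  simp only [Measure.smul_apply, Measure.prod_prod, smul_eq_mul]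
  ring

lemma my_sum_prod {α β ι : Type*} [MeasurableSpace α] [MeasurableSpace β]
    (s : Finset ι) (μ : ι → Measure α) (ν : Measure β)
    [∀ i, IsFiniteMeasure (μ i)] [IsFiniteMeasure ν] :
    (∑ i ∈ s, μ i).prod ν = ∑ i ∈ s, (μ i).prod ν := by
  classical
  induction s using Finset.induction_on with
  | empty => simp [Measure.zero_prod]
  | @insert a s ha ih =>
    haveI := my_finite_sum s μ
    rw [Finset.sum_insert ha, Finset.sum_insert ha, Measure.add_prod, ih]

lemma my_prod_sum {α β ι : Type*} [MeasurableSpace α] [MeasurableSpace β]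
    (t : Finset ι) (μ : Measure α) (ν : ι → Measure β)
    [∀ i, IsFiniteMeasure (ν i)] [IsFiniteMeasure μ] :
    μ.prod (∑ j ∈ t, ν j) = ∑ j ∈ t, μ.prod (ν j) := by
  classical
  induction t using Finset.induction_on with
  | empty => simp [Measure.prod_zero]
  | @insert a t ha ih =>
    haveI := my_finite_sum t ν
    rw [Finset.sum_insert ha, Finset.sum_insert ha, Measure.prod_add, ih]

lemma my_sum_dirac_prod {α β : Type*} [MeasurableSpace α] [MeasurableSpace β]
    (s : Finset α) (t : Finset β) :
    (∑ i ∈ s, Measure.dirac i).prod (∑ j ∈ t, Measure.dirac j)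
      = ∑ p ∈ s ×ˢ t, Measure.dirac p := by
  rw [my_sum_prod, Finset.sum_product]
  exact Finset.sum_congr rfl fun i _ => by
    rw [my_prod_sum]
    exact Finset.sum_congr rfl fun j _ => Measure.dirac_prod_dirac


lemma my_sum_id (n : ℕ) : ∑ a ∈ Finset.Ioc 0 n, (a : ℝ) = n * (n + 1) / 2 := by
  induction n with
  | zero => simp
  | succ n ih =>
    rw [Finset.sum_Ioc_succ_top (Nat.zero_le n), ih]
    push_cast; ring

lemma my_sum_quartic (c3 c2 c1 c0 : ℝ) (n : ℕ) :
    ∑ b ∈ Finset.Ioc 0 n,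
        ((b : ℝ) ^ 4 + c3 * (b : ℝ) ^ 3 + c2 * (b : ℝ) ^ 2 + c1 * (b : ℝ) + c0)
      = (n : ℝ) * (n + 1) * (2 * n + 1) * (3 * (n : ℝ) ^ 2 + 3 * n - 1) / 30
        + c3 * ((n : ℝ) * (n + 1) / 2) ^ 2
        + c2 * ((n : ℝ) * (n + 1) * (2 * n + 1) / 6)
        + c1 * ((n : ℝ) * (n + 1) / 2) + c0 * n := by
  induction n with
  | zero => simp
  | succ n ih =>
    rw [Finset.sum_Ioc_succ_top (Nat.zero_le n), ih]
    push_cast; ring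

lemma my_sum_abs {k b : ℕ} (hb1 : 1 ≤ b) (hbk : b ≤ k) :
    ∑ a ∈ Finset.Ioc 0 k, |(b : ℝ) - (a : ℝ)|
      = (b : ℝ) ^ 2 - ((k : ℝ) + 1) * b + ((k : ℝ) ^ 2 + k) / 2 := by
  rw [← Finset.sum_Ioc_consecutive _ (Nat.zero_le b) hbk]
  have h1 : ∑ a ∈ Finset.Ioc 0 b, |(b : ℝ) - (a : ℝ)|
      = ∑ a ∈ Finset.Ioc 0 b, ((b : ℝ) - (a : ℝ)) := by
    refine Finset.sum_congr rfl fun a ha => ?_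
    rw [Finset.mem_Ioc] at ha
    rw [abs_of_nonneg (by simp [sub_nonneg]; exact_mod_cast ha.2)]
  have h2 : ∑ a ∈ Finset.Ioc b k, |(b : ℝ) - (a : ℝ)|
      = ∑ a ∈ Finset.Ioc b k, ((a : ℝ) - (b : ℝ)) := by
    refine Finset.sum_congr rfl fun a ha => ?_
    rw [Finset.mem_Ioc] at ha
    rw [abs_sub_comm, abs_of_nonneg (by simp [sub_nonneg]; exact_mod_cast ha.1.le)]
  have hioc : ∑ a ∈ Finset.Ioc b k, (a : ℝ) = (k : ℝ) * (k + 1) / 2 - (b : ℝ) * (b + 1) / 2 := by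
    have := Finset.sum_Ioc_consecutive (fun a => (a : ℝ)) (Nat.zero_le b) hbk
    rw [my_sum_id, my_sum_id] at this
    linarith
  rw [h1, h2, Finset.sum_sub_distrib, Finset.sum_sub_distrib, my_sum_id, hioc,
    Finset.sum_const, Finset.sum_const, Nat.card_Ioc, Nat.card_Ioc, nsmul_eq_mul, nsmul_eq_mul,
    Nat.sub_zero, Nat.cast_sub hbk]
  ring

theorem cross_moment_T011_uniform
    {Ω : Type*} [MeasurableSpace Ω] (μ : Measure Ω) [IsProbabilityMeasure μ]
    (k : ℕ) (hk : 2 ≤ k) (x : Fin 3 → Ω → ℕ)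
    (hmeas : ∀ i, Measurable (x i))
    (hdist : ∀ i, Measure.map (x i) μ = unifMeasure k)
    (hindep : iIndepFun x μ) :
    ∫ ω, |(x 1 ω : ℝ) - (x 0 ω : ℝ)| * |(x 2 ω : ℝ) - (x 1 ω : ℝ)| ∂μ
      = ((k : ℝ) - 1) * ((k : ℝ) + 1) * (7 * (k : ℝ) ^ 2 - 8) / (60 * (k : ℝ) ^ 2) := by
  classical
  set ν := unifMeasure k with hν
  set s : Finset ℕ := Finset.Icc 1 k with hs
  set D : Measure ℕ := ∑ i ∈ s, Measure.dirac i with hD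
  set c : ℝ≥0∞ := (k : ℝ≥0∞)⁻¹ with hc
  have hcne : c ≠ ∞ := by
    simp only [hc, ne_eq, ENNReal.inv_eq_top, Nat.cast_eq_zero]
    omega
  haveI : IsFiniteMeasure D := my_finite_sum s _
  haveI : IsFiniteMeasure (c • D) := by
    constructor
    simp only [Measure.smul_apply, smul_eq_mul]
    exact ENNReal.mul_lt_top hcne.lt_top (measure_lt_top D _)
  haveI : IsFiniteMeasure (∑ p ∈ s ×ˢ s, Measure.dirac p) := my_finite_sum _ _
  have hνeq : ν = c • D := rfl
  haveI : IsFiniteMeasure ν := hνeq ▸ ‹IsFiniteMeasure (c • D)›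
  -- joint law
  have h01 : Measure.map (fun ω => (x 0 ω, x 1 ω)) μ = ν.prod ν := by
    have := (indepFun_iff_map_prod_eq_prod_map_map (hmeas 0).aemeasurable
      (hmeas 1).aemeasurable).mp (hindep.indepFun (show (0 : Fin 3) ≠ 1 by decide))
    rw [hdist 0, hdist 1] at this
    exact this
  have h2 : IndepFun (fun ω => (x 0 ω, x 1 ω)) (x 2) μ :=
    hindep.indepFun_prodMk hmeas 0 1 2 (by decide) (by decide)
  have hall : Measure.map (fun ω => ((x 0 ω, x 1 ω), x 2 ω)) μ = (ν.prod ν).prod ν := by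
    have := (indepFun_iff_map_prod_eq_prod_map_map ((hmeas 0).prodMk
      (hmeas 1)).aemeasurable (hmeas 2).aemeasurable).mp h2
    rw [h01, hdist 2] at this
    exact this
  -- the product measure as a weighted sum of diracs
  have hDD : ν.prod ν = (c * c) • ∑ p ∈ s ×ˢ s, Measure.dirac p := by
    rw [hνeq, my_smul_prod c hcne, my_prod_smul c hcne, hD, my_sum_dirac_prod, smul_smul]
  have hM3 : (ν.prod ν).prod ν = (c * c * c) • ∑ p ∈ (s ×ˢ s) ×ˢ s, Measure.dirac p := by
    rw [hDD, my_smul_prod (c * c) (ENNReal.mul_ne_top hcne hcne) _ ν, hνeq,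
      my_prod_smul c hcne, hD, my_sum_dirac_prod, smul_smul]
  -- transfer the integral
  set F : (ℕ × ℕ) × ℕ → ℝ :=
    fun p => |(p.1.2 : ℝ) - (p.1.1 : ℝ)| * |(p.2 : ℝ) - (p.1.2 : ℝ)| with hF
  have hT : Measurable (fun ω => ((x 0 ω, x 1 ω), x 2 ω)) :=
    ((hmeas 0).prodMk (hmeas 1)).prodMk (hmeas 2)
  have step1 : ∫ ω, |(x 1 ω : ℝ) - (x 0 ω : ℝ)| * |(x 2 ω : ℝ) - (x 1 ω : ℝ)| ∂μ
      = ∫ p, F p ∂((ν.prod ν).prod ν) := by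
    rw [← hall, integral_map hT.aemeasurable (measurable_of_countable F).aestronglyMeasurable]
  rw [step1, hM3, my_integral_sum_dirac]
  -- compute the sum
  have hsum : ∑ p ∈ (s ×ˢ s) ×ˢ s, F p
      = ∑ b ∈ Finset.Ioc 0 k,
          ((b : ℝ) ^ 2 - ((k : ℝ) + 1) * b + ((k : ℝ) ^ 2 + k) / 2) ^ 2 := by
    have hs' : s = Finset.Ioc 0 k := by rw [hs, ← Finset.Icc_add_one_left_eq_Ioc, zero_add]
    rw [Finset.sum_product, hs']
    have inner : ∀ q : ℕ × ℕ, ∑ cc ∈ Finset.Ioc 0 k, F (q, cc)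
        = |(q.2 : ℝ) - (q.1 : ℝ)| * ∑ cc ∈ Finset.Ioc 0 k, |(q.2 : ℝ) - (cc : ℝ)| := by
      intro q
      rw [Finset.mul_sum]
      exact Finset.sum_congr rfl fun cc _ => by rw [hF]; simp [abs_sub_comm]
    calc ∑ q ∈ Finset.Ioc 0 k ×ˢ Finset.Ioc 0 k, ∑ cc ∈ Finset.Ioc 0 k, F (q, cc)
        = ∑ a ∈ Finset.Ioc 0 k, ∑ b ∈ Finset.Ioc 0 k,
            |(b : ℝ) - (a : ℝ)| * ∑ cc ∈ Finset.Ioc 0 k, |(b : ℝ) - (cc : ℝ)| := by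
          rw [Finset.sum_product]
          exact Finset.sum_congr rfl fun a _ => Finset.sum_congr rfl fun b _ => inner (a, b)
      _ = ∑ b ∈ Finset.Ioc 0 k, (∑ a ∈ Finset.Ioc 0 k, |(b : ℝ) - (a : ℝ)|)
            * ∑ cc ∈ Finset.Ioc 0 k, |(b : ℝ) - (cc : ℝ)| := by
          rw [Finset.sum_comm]
          exact Finset.sum_congr rfl fun b _ => by rw [Finset.sum_mul]
      _ = _ := by
          refine Finset.sum_congr rfl fun b hb => ?_
          rw [Finset.mem_Ioc] at hb
          rw [my_sum_abs hb.1 hb.2]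
          ring
  rw [hsum]
  have hexp : ∀ b : ℕ, ((b : ℝ) ^ 2 - ((k : ℝ) + 1) * b + ((k : ℝ) ^ 2 + k) / 2) ^ 2
      = (b : ℝ) ^ 4 + (-(2 * ((k : ℝ) + 1))) * (b : ℝ) ^ 3
        + (((k : ℝ) + 1) ^ 2 + ((k : ℝ) ^ 2 + k)) * (b : ℝ) ^ 2
        + (-(((k : ℝ) + 1) * ((k : ℝ) ^ 2 + k))) * (b : ℝ)
        + (((k : ℝ) ^ 2 + k) / 2) ^ 2 := fun b => by ring
  simp only [hexp]
  rw [my_sum_quartic]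
  have htr : (c * c * c).toReal = ((k : ℝ)⁻¹) ^ 3 := by
    rw [hc, ENNReal.toReal_mul, ENNReal.toReal_mul, ENNReal.toReal_inv,
      ENNReal.toReal_natCast]
    ring
  rw [htr]
  have hk0 : (k : ℝ) ≠ 0 := by
    have : (0 : ℝ) < k := by exact_mod_cast Nat.lt_of_lt_of_le (by norm_num) hk
    linarith
  field_simp
  ring
end
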